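/- Let x₁,…,xₙ ∈ ℝᵈ satisfy the ℓ₂² triangle inequalities and let M be the difference matrix with columns {xᵢ−xⱼ}_{i<j}. Define P = Σ_{k<l} (|v_{kl}|/‖v‖₁)(xₖ−xₗ)(xₖ−xₗ)ᵀ where v is the top right singular vector of M. Then Σ_{i<j} ‖P^{1/2}(xᵢ−xⱼ)‖ ≥ σ₁(M)² = (1/sr(M)) Σ_{i<j} ‖xᵢ−xⱼ‖². -/

import Mathlib

open Matrix
open scoped ComplexOrder in
noncomputable def Matrix.PosSemidef.sqrt {n : Type*} [Fintype n] [DecidableEq n] {𝕜 : Type*}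
    [RCLike 𝕜] {A : Matrix n n 𝕜} (hA : A.PosSemidef) : Matrix n n 𝕜 :=
  hA.1.eigenvectorUnitary.1 * diagonal ((↑) ∘ (√·) ∘ hA.1.eigenvalues) *
    (star hA.1.eigenvectorUnitary : Matrix n n 𝕜)

open scoped ComplexOrder in
theorem Matrix.PosSemidef.sqrt_isHermitian {n : Type*} [Fintype n] [DecidableEq n] {𝕜 : Type*}
    [RCLike 𝕜] {A : Matrix n n 𝕜} (hA : A.PosSemidef) : hA.sqrt.IsHermitian := by
  unfold Matrix.PosSemidef.sqrt
  rw [show (star hA.1.eigenvectorUnitary : Matrix n n 𝕜) = (hA.1.eigenvectorUnitary.1)ᴴ from rfl]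
  refine isHermitian_mul_mul_conjTranspose _ (isHermitian_diagonal_of_self_adjoint _ ?_)
  ext i
  simp [Function.comp_apply]

open scoped ComplexOrder in
theorem Matrix.PosSemidef.sqrt_mul_self {n : Type*} [Fintype n] [DecidableEq n] {𝕜 : Type*}
    [RCLike 𝕜] {A : Matrix n n 𝕜} (hA : A.PosSemidef) : hA.sqrt * hA.sqrt = A := by
  unfold Matrix.PosSemidef.sqrt
  conv_rhs => rw [hA.1.spectral_theorem, Unitary.conjStarAlgAut_apply]
  have hU : (star hA.1.eigenvectorUnitary : Matrix n n 𝕜) * hA.1.eigenvectorUnitary.1 = 1 :=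
    Unitary.coe_star_mul_self _
  calc _ = hA.1.eigenvectorUnitary.1 * diagonal ((↑) ∘ (√·) ∘ hA.1.eigenvalues) *
        ((star hA.1.eigenvectorUnitary : Matrix n n 𝕜) * hA.1.eigenvectorUnitary.1) *
        diagonal ((↑) ∘ (√·) ∘ hA.1.eigenvalues) *
        (star hA.1.eigenvectorUnitary : Matrix n n 𝕜) := by simp only [Matrix.mul_assoc]
    _ = _ := by
      rw [hU, Matrix.mul_one, Matrix.mul_assoc _ (diagonal _) (diagonal _), diagonal_mul_diagonal]
      congr 3
      funext i
      simp only [Function.comp_apply, ← RCLike.ofReal_mul, Real.mul_self_sqrt (hA.eigenvalues_nonneg i)]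

theorem quad_aux {m k : Type*} [Fintype m] [Fintype k] (y : m → ℝ) (c : k → ℝ) (a : k → m → ℝ) :
    y ⬝ᵥ (∑ l, c l • vecMulVec (a l) (a l)).mulVec y = ∑ l, c l * (a l ⬝ᵥ y) ^ 2 := by
  simp only [mulVec, dotProduct, Matrix.sum_apply, Matrix.smul_apply, vecMulVec_apply,
    smul_eq_mul, Finset.mul_sum, Finset.sum_mul, pow_two]
  refine ((Finset.sum_congr rfl fun t _ => Finset.sum_comm).trans
    ((Finset.sum_comm).trans ?_) :
      (∑ t : m, ∑ s : m, ∑ l : k, y t * (c l * (a l t * a l s) * y s)) = _)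
  refine Finset.sum_congr rfl fun l _ => (Finset.sum_comm).trans ?_
  exact Finset.sum_congr rfl fun t _ => Finset.sum_congr rfl fun s _ => by ring

/-- With `P = Σ_{k<l} (|v_{kl}|/‖v‖₁)(xₖ−xₗ)(xₖ−xₗ)ᵀ` built from the top right singular
vector `v` of the difference matrix `M`, the embedding `xᵢ ↦ P^{1/2}xᵢ` has total spread at
least `σ₁(M)² = (1/sr(M)) Σ_{i<j} ‖xᵢ−xⱼ‖²`. -/
theorem stmt5 (n d : ℕ) (x : Fin n → Fin d → ℝ)
    (htri : ∀ i j k, (x i - x j) ⬝ᵥ (x i - x j) + (x j - x k) ⬝ᵥ (x j - x k) ≥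
      (x i - x k) ⬝ᵥ (x i - x k))
    (M : Matrix (Fin d) {q : Fin n × Fin n // q.1 < q.2} ℝ)
    (hM : ∀ q t, M t q = x q.1.1 t - x q.1.2 t)
    (σ : ℝ) (u : Fin d → ℝ) (v : {q : Fin n × Fin n // q.1 < q.2} → ℝ)
    (hσ : 0 < σ) (hu : u ⬝ᵥ u = 1) (hv : v ⬝ᵥ v = 1)
    (hMv : M.mulVec v = σ • u) (huM : M.vecMul u = σ • v)
    (htop : ∀ w, Real.sqrt (M.mulVec w ⬝ᵥ M.mulVec w) ≤ σ * Real.sqrt (w ⬝ᵥ w))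
    (P : Matrix (Fin d) (Fin d) ℝ)
    (hPdef : P = ∑ q : {q : Fin n × Fin n // q.1 < q.2},
      (|v q| / ∑ q', |v q'|) • vecMulVec (x q.1.1 - x q.1.2) (x q.1.1 - x q.1.2))
    (hP : P.PosSemidef)
    (srM : ℝ) (hsr : srM = (∑ t, ∑ q, M t q ^ 2) / σ ^ 2) :
    (∑ q : {q : Fin n × Fin n // q.1 < q.2},
        Real.sqrt (hP.sqrt.mulVec (x q.1.1 - x q.1.2) ⬝ᵥ
          hP.sqrt.mulVec (x q.1.1 - x q.1.2)) ≥ σ ^ 2) ∧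
      σ ^ 2 = (1 / srM) * ∑ q : {q : Fin n × Fin n // q.1 < q.2},
        (x q.1.1 - x q.1.2) ⬝ᵥ (x q.1.1 - x q.1.2) := by
  have hD : ∀ q : {q : Fin n × Fin n // q.1 < q.2},
      (x q.1.1 - x q.1.2 : Fin d → ℝ) = fun t => x q.1.1 t - x q.1.2 t := fun q => rfl
  set D : {q : Fin n × Fin n // q.1 < q.2} → Fin d → ℝ := fun q => x q.1.1 - x q.1.2 with hDdef
  set L1 : ℝ := ∑ q', |v q'| with hL1
  have hvne : ∃ q, v q ≠ 0 := by
    by_contra h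
    push_neg at h
    simp [dotProduct, h] at hv
  have hL1pos : 0 < L1 := by
    obtain ⟨q0, hq0⟩ := hvne
    exact Finset.sum_pos' (fun q _ => abs_nonneg _)
      ⟨q0, Finset.mem_univ _, abs_pos.mpr hq0⟩
  clear_value L1
  have hcol : ∀ q t, M t q = D q t := by
    intro q t; simp [hDdef, hM]
  -- u ⬝ D q = σ * v q
  have hudq : ∀ q, u ⬝ᵥ D q = σ * v q := by
    intro q
    have h := congrFun huM q
    simp only [vecMul, dotProduct, Pi.smul_apply, smul_eq_mul] at h ⊢
    rw [← h]
    exact Finset.sum_congr rfl fun t _ => by rw [hcol]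
  -- D q ⬝ Mv = σ^2 * v q
  have hdqMv : ∀ q, D q ⬝ᵥ M.mulVec v = σ ^ 2 * v q := by
    intro q
    rw [hMv, dotProduct_smul, dotProduct_comm, hudq q, smul_eq_mul]
    ring
  -- D q ⬝ Mv = ∑ l, v l * (D q ⬝ D l)
  have hdqMv' : ∀ q, D q ⬝ᵥ M.mulVec v = ∑ l, v l * (D q ⬝ᵥ D l) := by
    intro q
    simp only [dotProduct, mulVec, Finset.mul_sum, Finset.sum_mul]
    rw [Finset.sum_comm]
    refine Finset.sum_congr rfl fun l _ => Finset.sum_congr rfl fun t _ => ?_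
    rw [hcol]; ring
  -- quadratic form of P
  have hquad : ∀ y : Fin d → ℝ,
      y ⬝ᵥ P.mulVec y = ∑ l, (|v l| / L1) * (D l ⬝ᵥ y) ^ 2 := by
    intro y
    rw [hPdef]
    exact quad_aux y (fun l => |v l| / L1) D
  -- the sqrt quadratic form
  have hSq : ∀ y : Fin d → ℝ, hP.sqrt.mulVec y ⬝ᵥ hP.sqrt.mulVec y = y ⬝ᵥ P.mulVec y := by
    intro y
    have hsym : hP.sqrtᵀ = hP.sqrt := hP.sqrt_isHermitian
    calc hP.sqrt.mulVec y ⬝ᵥ hP.sqrt.mulVec y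
        = hP.sqrt.vecMul (hP.sqrt.mulVec y) ⬝ᵥ y := (dotProduct_mulVec _ _ _)
      _ = (hP.sqrtᵀ.mulVec (hP.sqrt.mulVec y)) ⬝ᵥ y := by rw [mulVec_transpose]
      _ = ((hP.sqrt * hP.sqrt).mulVec y) ⬝ᵥ y := by rw [hsym, mulVec_mulVec]
      _ = (P.mulVec y) ⬝ᵥ y := by rw [hP.sqrt_mul_self]
      _ = y ⬝ᵥ P.mulVec y := dotProduct_comm _ _
  -- pointwise lower bound
  have hpt : ∀ q : {q : Fin n × Fin n // q.1 < q.2}, σ ^ 2 * |v q| / L1 ≤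
      Real.sqrt (hP.sqrt.mulVec (D q) ⬝ᵥ hP.sqrt.mulVec (D q)) := by
    intro q
    rw [hSq, hquad]
    have hb : 0 ≤ σ ^ 2 * |v q| / L1 := by positivity
    rw [show σ ^ 2 * |v q| / L1 = Real.sqrt ((σ ^ 2 * |v q| / L1) ^ 2) by
      rw [Real.sqrt_sq hb]]
    apply Real.sqrt_le_sqrt
    set a : {q : Fin n × Fin n // q.1 < q.2} → ℝ := fun l => D q ⬝ᵥ D l with ha
    have key : (σ ^ 2 * v q) ^ 2 ≤ L1 * ∑ l, |v l| * a l ^ 2 := by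
      have hsum : σ ^ 2 * v q = ∑ l, v l * a l := by
        rw [← hdqMv, hdqMv']
      set f : {q : Fin n × Fin n // q.1 < q.2} → ℝ := fun l => v l / Real.sqrt |v l| with hf
      set g : {q : Fin n × Fin n // q.1 < q.2} → ℝ := fun l => Real.sqrt |v l| * a l with hg
      have hfg : ∀ l, f l * g l = v l * a l := by
        intro l
        by_cases h : v l = 0
        · simp [hf, hg, h]
        · have hs : Real.sqrt |v l| ≠ 0 := by
            simp [Real.sqrt_eq_zero', abs_ne_zero.mpr h, not_le, abs_pos.mpr h]
          rw [hf, hg]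
          field_simp
      have hf2 : ∀ l, f l ^ 2 = |v l| := by
        intro l
        by_cases h : v l = 0
        · simp [hf, h]
        · rw [hf]
          rw [div_pow, Real.sq_sqrt (abs_nonneg _), ← sq_abs]
          rw [sq, mul_div_assoc, div_self (abs_ne_zero.mpr h), mul_one]
      have hg2 : ∀ l, g l ^ 2 = |v l| * a l ^ 2 := by
        intro l
        rw [hg, mul_pow, Real.sq_sqrt (abs_nonneg _)]
      calc (σ ^ 2 * v q) ^ 2 = (∑ l, f l * g l) ^ 2 := by
            rw [hsum]; congr 1; exact Finset.sum_congr rfl fun l _ => (hfg l).symm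
        _ ≤ (∑ l, f l ^ 2) * ∑ l, g l ^ 2 := Finset.sum_mul_sq_le_sq_mul_sq _ _ _
        _ = L1 * ∑ l, |v l| * a l ^ 2 := by
            have e1 : (∑ l, f l ^ 2) = L1 := by
              rw [hL1]; exact Finset.sum_congr rfl fun l _ => hf2 l
            have e2 : (∑ l, g l ^ 2) = ∑ l, |v l| * a l ^ 2 :=
              Finset.sum_congr rfl fun l _ => hg2 l
            rw [e1, e2]
    have hrw : ∑ l, |v l| / L1 * (D l ⬝ᵥ D q) ^ 2 = (1 / L1) * ∑ l, |v l| * a l ^ 2 := by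
      rw [Finset.mul_sum]
      refine Finset.sum_congr rfl fun l _ => ?_
      rw [ha]
      simp only [dotProduct_comm (D l) (D q)]
      ring
    rw [hrw]
    rw [div_pow, mul_pow, pow_two L1]
    rw [div_le_iff₀ (mul_pos hL1pos hL1pos)]
    calc (σ ^ 2) ^ 2 * |v q| ^ 2 = (σ ^ 2 * v q) ^ 2 := by rw [mul_pow, sq_abs]
      _ ≤ L1 * ∑ l, |v l| * a l ^ 2 := key
      _ = 1 / L1 * (∑ l, |v l| * a l ^ 2) * (L1 * L1) := by
          field_simp
  constructor
  · show ∑ q : {q : Fin n × Fin n // q.1 < q.2},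
        Real.sqrt (hP.sqrt.mulVec (D q) ⬝ᵥ hP.sqrt.mulVec (D q)) ≥ σ ^ 2
    calc ∑ q : {q : Fin n × Fin n // q.1 < q.2},
          Real.sqrt (hP.sqrt.mulVec (D q) ⬝ᵥ hP.sqrt.mulVec (D q))
        ≥ ∑ q : {q : Fin n × Fin n // q.1 < q.2}, σ ^ 2 * |v q| / L1 :=
          Finset.sum_le_sum fun q _ => hpt q
      _ = σ ^ 2 := by
          rw [show (fun q : {q : Fin n × Fin n // q.1 < q.2} => σ ^ 2 * |v q| / L1)
              = fun q => σ ^ 2 / L1 * |v q| from funext fun q => by ring]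
          rw [← Finset.mul_sum, ← hL1, div_mul_cancel₀ _ hL1pos.ne']
  · -- second part
    have hF : (∑ t, ∑ q, M t q ^ 2)
        = ∑ q : {q : Fin n × Fin n // q.1 < q.2}, D q ⬝ᵥ D q := by
      rw [Finset.sum_comm]
      refine Finset.sum_congr rfl fun q _ => ?_
      simp only [dotProduct, hcol, pow_two]
    have hFpos : 0 < ∑ t, ∑ q, M t q ^ 2 := by
      by_contra h
      push_neg at h
      have h0 : ∑ t, ∑ q, M t q ^ 2 = 0 := le_antisymm h (Finset.sum_nonneg fun t _ => Finset.sum_nonneg fun q _ => sq_nonneg _)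
      have hM0 : ∀ t q, M t q = 0 := by
        intro t q
        have h1 := (Finset.sum_eq_zero_iff_of_nonneg (fun t _ => Finset.sum_nonneg fun q _ => sq_nonneg _)).mp h0 t
          (Finset.mem_univ _)
        have h2 := (Finset.sum_eq_zero_iff_of_nonneg (fun q _ => sq_nonneg _)).mp h1 q
          (Finset.mem_univ _)
        exact pow_eq_zero_iff (by norm_num) |>.mp h2
      have hMv0 : M.mulVec v = 0 := by
        funext t; simp [mulVec, dotProduct, hM0]
      rw [hMv] at hMv0
      have hu0 : u = 0 := by
        funext t
        have h3 := congrFun hMv0 t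
        simp only [Pi.smul_apply, smul_eq_mul, Pi.zero_apply, mul_eq_zero] at h3
        rcases h3 with h3 | h3
        · exact absurd h3 hσ.ne'
        · simpa using h3
      rw [hu0] at hu
      simp [dotProduct] at hu
    show σ ^ 2 = 1 / srM * ∑ q : {q : Fin n × Fin n // q.1 < q.2}, D q ⬝ᵥ D q
    rw [hsr, hF, one_div, inv_div, div_mul_cancel₀ _ (hF ▸ hFpos).ne']
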